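/- Let a, b, c, α, β, γ ∈ ℝ, let y : ℝ → ℝ, and let t₀ ∈ ℝ. Set D(t) = αt² + βt + γ and N(t) = at² + bt + c, and suppose D(t₀) ≠ 0, (αt₀² + βt₀ + γ)·y(t₀) + at₀² + bt₀ + c ≠ 0, and y has derivative 1/((αt₀² + βt₀ + γ)·y(t₀) + at₀² + bt₀ + c) at t₀ — that is, y solves the AIR equation with s₂ = α, s₁ = β, s₀ = γ, r₂ = a, r₁ = b, r₀ = c, a₃ = a₂ = a₁ = 0, a₀ = −1. Define u(t) = 1/(y(t) + N(t)/D(t)). Then u has derivative −u(t₀)³/D(t₀) − ((2at₀ + b)·D(t₀) − N(t₀)·(2αt₀ + β))/D(t₀)² · u(t₀)² at t₀; that is, u satisfies Appell's equation y' = −y³/(αx² + βx + γ) − (d/dx)[(ax² + bx + c)/(αx² + βx + γ)]·y². Hence Appell's general parameterized equation is a member of the AIR class. -/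

import Mathlib

set_option maxHeartbeats 1000000


/-- Appell's general parameterized equation
`y' = −y³/(αx² + βx + γ) − (d/dx)[(ax² + bx + c)/(αx² + βx + γ)]·y²`
is a member of the AIR class: it is obtained from the AIR equation with parameters
`s₂ = α, s₁ = β, s₀ = γ, r₂ = a, r₁ = b, r₀ = c, a₃ = a₂ = a₁ = 0, a₀ = −1`
by the change of variables `{x = t, y = 1/u − (at² + bt + c)/(αt² + βt + γ)}`. -/
theorem general_appell_member_of_AIR
    (a b c α β γ : ℝ) (y : ℝ → ℝ) (t₀ : ℝ)
    (D N : ℝ → ℝ)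
    (hD : D = fun t => α * t ^ 2 + β * t + γ)
    (hN : N = fun t => a * t ^ 2 + b * t + c)
    (hD0 : D t₀ ≠ 0)
    (hden : (α * t₀ ^ 2 + β * t₀ + γ) * y t₀ + a * t₀ ^ 2 + b * t₀ + c ≠ 0)
    (hy : HasDerivAt y
      (1 / ((α * t₀ ^ 2 + β * t₀ + γ) * y t₀ + a * t₀ ^ 2 + b * t₀ + c)) t₀)
    (u : ℝ → ℝ) (hu : u = fun t => 1 / (y t + N t / D t)) :
    HasDerivAt u
      (-(u t₀) ^ 3 / D t₀ -
        ((2 * a * t₀ + b) * D t₀ - N t₀ * (2 * α * t₀ + β)) / (D t₀) ^ 2 *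
          (u t₀) ^ 2) t₀ := by
  subst hD hN hu
  simp only at hD0 ⊢
  have hDd : HasDerivAt (fun t => α * t ^ 2 + β * t + γ) (2 * α * t₀ + β) t₀ := by
    have h := (((hasDerivAt_pow 2 t₀).const_mul α).add
      (((hasDerivAt_id t₀).const_mul β).add_const γ))
    convert h using 1
    · rfl
    · rfl
    · funext t; simp [id]; ring
    · push_cast; ring
  have hNd : HasDerivAt (fun t => a * t ^ 2 + b * t + c) (2 * a * t₀ + b) t₀ := by
    have h := (((hasDerivAt_pow 2 t₀).const_mul a).add
      (((hasDerivAt_id t₀).const_mul b).add_const c))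
    convert h using 1
    · rfl
    · rfl
    · funext t; simp [id]; ring
    · push_cast; ring
  set D₀ : ℝ := α * t₀ ^ 2 + β * t₀ + γ with hD₀
  set N₀ : ℝ := a * t₀ ^ 2 + b * t₀ + c with hN₀
  have hdy : D₀ * y t₀ + N₀ ≠ 0 := by
    intro h; apply hden; rw [hN₀] at h; linarith
  have hw₀ : y t₀ + N₀ / D₀ ≠ 0 := by
    intro h
    apply hdy
    field_simp at h
    linarith [h, mul_comm (y t₀) D₀]
  have hw : HasDerivAt (fun t => y t + (a * t ^ 2 + b * t + c) / (α * t ^ 2 + β * t + γ))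
      (1 / (D₀ * y t₀ + N₀) +
        ((2 * a * t₀ + b) * D₀ - N₀ * (2 * α * t₀ + β)) / D₀ ^ 2) t₀ := by
    have := hNd.div hDd hD0
    have h2 := hy.add this
    convert h2 using 1
    · rfl
    · rfl
    · rfl
    rw [hD₀, hN₀]
    ring_nf
  have hinv := hw.inv hw₀
  have : HasDerivAt (fun t => 1 / (y t + (a * t ^ 2 + b * t + c) / (α * t ^ 2 + β * t + γ)))
      (-(1 / (D₀ * y t₀ + N₀) +
        ((2 * a * t₀ + b) * D₀ - N₀ * (2 * α * t₀ + β)) / D₀ ^ 2) /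
        (y t₀ + N₀ / D₀) ^ 2) t₀ := by
    convert hinv using 1
    · rfl
    · rfl
    · funext t; simp [one_div]
  convert this using 1
  clear_value D₀ N₀
  have h1 : D₀ * y t₀ + N₀ = (y t₀ + N₀ / D₀) * D₀ := by field_simp
  rw [h1]
  generalize hwg : y t₀ + N₀ / D₀ = w at hw₀ ⊢
  generalize (2 * a * t₀ + b) * D₀ - N₀ * (2 * α * t₀ + β) = K
  field_simp
  ring
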